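/- For each h₀ ∈ [0,1), the set of r > 0 for which there exists c ∈ (0, e^{-1/2}) making (h₀, h₀+r) a good pair with respect to c is nonempty and bounded above; i.e., its supremum r_{h₀} satisfies 0 < r_{h₀} < ∞. -/

import Mathlib

open Real

/-- A pair `(a, b)` is a good pair with respect to `c`. -/
def GoodPair (c a b : ℝ) : Prop :=
  a < b ∧ c * a + Real.exp (-a^2/2) = c * b + Real.exp (-b^2/2) ∧
    0 < c - a * Real.exp (-a^2/2) ∧ c - b * Real.exp (-b^2/2) ≤ 0

lemma g_strict_lt {x y : ℝ} (hx : 0 ≤ x) (hxy : x < y) (hy : y ≤ 1) :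
    x * Real.exp (-x^2/2) < y * Real.exp (-y^2/2) := by
  have hy0 : 0 < y := lt_of_le_of_lt hx hxy
  have hne : (x^2 - y^2)/2 ≠ 0 := by
    have : x^2 < y^2 := by nlinarith
    intro h; nlinarith
  have hU : (x^2 - y^2)/2 + 1 < Real.exp ((x^2 - y^2)/2) :=
    Real.add_one_lt_exp hne
  have key : x < y * Real.exp ((x^2 - y^2)/2) := by
    have h3 : 0 < 2 - y*(x+y) := by nlinarith
    have h4 : 0 < (y - x) * (2 - y*(x+y)) := mul_pos (by linarith) h3
    nlinarith [mul_lt_mul_of_pos_left hU hy0]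
  have hEe : Real.exp ((x^2 - y^2)/2) * Real.exp (-x^2/2) = Real.exp (-y^2/2) := by
    rw [← Real.exp_add]; ring_nf
  calc x * Real.exp (-x^2/2)
      < (y * Real.exp ((x^2 - y^2)/2)) * Real.exp (-x^2/2) :=
        mul_lt_mul_of_pos_right key (Real.exp_pos _)
    _ = y * Real.exp (-y^2/2) := by rw [mul_assoc, hEe]

lemma half_lt_exp_neg_half : (1:ℝ)/2 < Real.exp (-1/2) := by
  have h1 : Real.exp (1/2) * Real.exp (1/2) = Real.exp 1 := by
    rw [← Real.exp_add]; norm_num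
  have h2 : Real.exp (1/2) < 2 := by
    nlinarith [Real.exp_one_lt_d9, Real.exp_pos (1/2 : ℝ),
      sq_nonneg (Real.exp (1/2) - 2)]
  have h3 : Real.exp (-1/2) * Real.exp (1/2) = 1 := by
    rw [← Real.exp_add]; norm_num
  have h4 : 0 < Real.exp (-1/2) * (2 - Real.exp (1/2)) :=
    mul_pos (Real.exp_pos _) (by linarith)
  linarith [h3, h4]


lemma exp_small {b : ℝ} (hb8 : 8 < b) : (1 + b^2) * Real.exp (-b^2/2) < 1/2 := by
  have hbp : (0:ℝ) < b := by linarith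
  have h1 : b^2/4 < Real.exp (b^2/4) := by
    linarith [Real.add_one_lt_exp (x := b^2/4) (by positivity)]
  have hX : Real.exp (-(b^2/4)) * Real.exp (b^2/4) = 1 := by
    rw [← Real.exp_add]; norm_num
  have hXpos : 0 < Real.exp (-(b^2/4)) := Real.exp_pos _
  have h2' : Real.exp (-(b^2/4)) * b^2 < 4 := by
    linarith [mul_lt_mul_of_pos_left h1 hXpos]
  have h3 : Real.exp (-b^2/2) = Real.exp (-(b^2/4)) * Real.exp (-(b^2/4)) := by
    rw [← Real.exp_add]; ring_nf
  have hEb : Real.exp (-b^2/2) < 16 / b^4 := by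
    rw [lt_div_iff₀ (by positivity : (0:ℝ) < b^4), h3]
    have h9 : (Real.exp (-(b^2/4)) * b^2) * (Real.exp (-(b^2/4)) * b^2) < 4 * 4 :=
      mul_lt_mul' h2'.le h2' (by positivity) (by norm_num)
    have h10 : Real.exp (-(b^2/4)) * Real.exp (-(b^2/4)) * b^4
        = (Real.exp (-(b^2/4)) * b^2) * (Real.exp (-(b^2/4)) * b^2) := by ring
    linarith
  have h7 : (1 + b^2) * Real.exp (-b^2/2) < (1 + b^2) * (16 / b^4) :=
    mul_lt_mul_of_pos_left hEb (by positivity)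
  have h8 : (1 + b^2) * (16 / b^4) ≤ 1/2 := by
    rw [mul_div_assoc', div_le_iff₀ (by positivity : (0:ℝ) < b^4)]
    have hb2 : (64:ℝ) < b^2 := by nlinarith
    have h64 : 64 * b^2 < b^2 * b^2 := by nlinarith
    have hb4 : b^2 * b^2 = b^4 := by ring
    nlinarith
  linarith

lemma bound_aux {h₀ r c' : ℝ} (ha0 : 0 ≤ h₀) (ha1 : h₀ < 1) (hrpos : 0 < r)
    (heq' : c' * h₀ + Real.exp (-h₀^2/2) = c' * (h₀ + r) + Real.exp (-(h₀ + r)^2/2))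
    (hg2 : c' - (h₀ + r) * Real.exp (-(h₀ + r)^2/2) ≤ 0) : r ≤ 8 := by
  by_contra hcon
  push_neg at hcon
  set E : ℝ := Real.exp (-(h₀ + r)^2/2) with hEdef
  have hEpos : 0 < E := Real.exp_pos _
  have hb8 : 8 < h₀ + r := by linarith
  have heq2 : c' * r = Real.exp (-h₀^2/2) - E := by linear_combination -heq'
  have hEa : Real.exp (-1/2) ≤ Real.exp (-h₀^2/2) :=
    Real.exp_le_exp.2 (by nlinarith)
  have hc'le : c' ≤ (h₀ + r) * E := by linarith
  have hchain : Real.exp (-h₀^2/2) ≤ (1 + (h₀ + r)^2) * E := by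
    have h5 : c' * r ≤ (h₀ + r) * E * r :=
      mul_le_mul_of_nonneg_right hc'le hrpos.le
    have h6 : (h₀ + r) * E * r ≤ (h₀ + r) * E * (h₀ + r) :=
      mul_le_mul_of_nonneg_left (by linarith) (by positivity)
    have h6' : (h₀ + r) * E * (h₀ + r) = (h₀ + r)^2 * E := by ring
    have h7 : (1 + (h₀ + r)^2) * E = E + (h₀ + r)^2 * E := by ring
    linarith
  have hsmall := exp_small hb8
  rw [← hEdef] at hsmall
  linarith [half_lt_exp_neg_half]

theorem stmt15 (h₀ : ℝ) (hh₀ : h₀ ∈ Set.Ico (0:ℝ) 1) :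
    let S : Set ℝ := {r | 0 < r ∧
      ∃ c ∈ Set.Ioo (0:ℝ) (Real.exp (-1/2)), GoodPair c h₀ (h₀ + r)}
    S.Nonempty ∧ BddAbove S ∧ 0 < sSup S := by
  obtain ⟨ha0, ha1⟩ := hh₀
  intro S
  -- Nonemptiness witness
  set r₀ : ℝ := (1 - h₀)/2 with hr₀def
  have hr₀ : 0 < r₀ := by simp only [hr₀def]; linarith
  set b₀ : ℝ := h₀ + r₀ with hb₀def
  have hab : h₀ < b₀ := by simp only [hb₀def]; linarith
  have hb₀lt : b₀ < 1 := by simp only [hb₀def, hr₀def]; linarith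
  have hcont : ContinuousOn (fun t : ℝ => Real.exp (-t^2/2)) (Set.Icc h₀ b₀) :=
    (Real.continuous_exp.comp (by continuity)).continuousOn
  have hderiv : ∀ x ∈ Set.Ioo h₀ b₀,
      HasDerivAt (fun t : ℝ => Real.exp (-t^2/2)) (-x * Real.exp (-x^2/2)) x := by
    intro x _
    have h1 : HasDerivAt (fun t : ℝ => -t^2/2) (-x) x := by
      have h := ((hasDerivAt_pow 2 x).neg.div_const 2)
      refine h.congr_deriv ?_
      push_cast
      ring
    have h2 := h1.exp
    convert h2 using 1
    ring
  obtain ⟨ξ, hξmem, hslope⟩ := exists_hasDerivAt_eq_slope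
    (fun t : ℝ => Real.exp (-t^2/2)) (fun x => -x * Real.exp (-x^2/2)) hab hcont hderiv
  obtain ⟨hξl, hξr⟩ := hξmem
  set c : ℝ := ξ * Real.exp (-ξ^2/2) with hcdef
  have hξpos : 0 < ξ := lt_of_le_of_lt ha0 hξl
  have hξlt1 : ξ < 1 := lt_trans hξr hb₀lt
  have hc_pos : 0 < c := mul_pos hξpos (Real.exp_pos _)
  have hc_lt : c < Real.exp (-1/2) := by
    have h1 := g_strict_lt hξpos.le hξlt1 le_rfl
    have h2 : (1:ℝ) * Real.exp (-1^2/2) = Real.exp (-1/2) := by norm_num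
    rw [h2] at h1
    rw [hcdef]; exact h1
  -- the slope equation
  have hne : b₀ - h₀ ≠ 0 := by intro h; simp only [hb₀def] at h; linarith
  rw [eq_div_iff hne] at hslope
  have heq : c * h₀ + Real.exp (-h₀^2/2) = c * b₀ + Real.exp (-b₀^2/2) := by
    linear_combination hslope + (h₀ - b₀) * hcdef
  have hmem : r₀ ∈ S := by
    refine ⟨hr₀, c, ⟨hc_pos, hc_lt⟩, hab, heq, ?_, ?_⟩
    · have h1 := g_strict_lt ha0 hξl (le_of_lt hξlt1)
      rw [hcdef]; linarith
    · have h1 := g_strict_lt hξpos.le hξr hb₀lt.le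
      rw [hcdef]; linarith
  -- Bounded above by 8
  have hbdd : BddAbove S := by
    refine ⟨8, fun r hr => ?_⟩
    obtain ⟨hrpos, c', ⟨hc'0, hc'lt⟩, hlt, heq', hg1, hg2⟩ := hr
    exact bound_aux ha0 ha1 hrpos heq' hg2
  refine ⟨⟨r₀, hmem⟩, hbdd, ?_⟩
  exact lt_of_lt_of_le hr₀ (le_csSup hbdd hmem)
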